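/- The set S = {ψ(S_k) : 0 ≤ k ≤ q−1} forms a (q, q, q) complete complementary code: for all k₁, k₂ and all shifts τ with |τ| < q, the aperiodic cross-correlation sum Φ(ψ(S_{k₁}), ψ(S_{k₂}))(τ) equals q² if τ = 0 and k₁ = k₂, and equals 0 otherwise. -/

import Mathlib

open Complex Finset

noncomputable def gfTr (p r : ℕ) [Fact p.Prime] : GaloisField p r → ZMod p :=
  Algebra.trace (ZMod p) (GaloisField p r)

/-- The additive character `χ_b(c) = exp(2πi·Tr(bc)/p)`. -/
noncomputable def chi (p r : ℕ) [Fact p.Prime] (b c : GaloisField p r) : ℂ :=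
  Complex.exp (2 * Real.pi * Complex.I * ((gfTr p r (b * c)).val : ℂ) / p)

/-- `a(0) = 0` and `a(i) = α^{i-1}` for `i ≥ 1`. -/
noncomputable def aMap {p r : ℕ} [Fact p.Prime] (α : GaloisField p r) (i : ℕ) :
    GaloisField p r :=
  if i = 0 then 0 else α ^ (i - 1)

/-- The dot product `k·i` of the base-`p` digit vectors of `k` and `i`. -/
def dotDigits (p r k i : ℕ) : ℕ :=
  ∑ j ∈ Finset.range r, (k / p ^ j % p) * (i / p ^ j % p)

/-- The sequence entries `S_{k,l}(i) = ω_p^{(k·i) + Tr(a(i)a(l))}`. -/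
noncomputable def Skl (p r : ℕ) [Fact p.Prime] (α : GaloisField p r) (k l i : ℕ) : ℂ :=
  Complex.exp (2 * Real.pi * Complex.I / p) ^
    (dotDigits p r k i + (gfTr p r (aMap α i * aMap α l)).val)

/-! ### Auxiliary machinery -/

noncomputable def wC (p : ℕ) : ℂ := Complex.exp (2 * Real.pi * Complex.I / p)

lemma wprim (p : ℕ) [Fact p.Prime] : IsPrimitiveRoot (wC p) p :=
  Complex.isPrimitiveRoot_exp p (Fact.out : p.Prime).ne_zero

noncomputable def eC (p : ℕ) [Fact p.Prime] : AddChar (ZMod p) ℂ :=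
  AddChar.zmodChar p (wprim p).pow_eq_one

lemma eC_apply (p : ℕ) [Fact p.Prime] (t : ZMod p) : eC p t = wC p ^ t.val :=
  AddChar.zmodChar_apply _ t

lemma conj_wC_pow (p n : ℕ) : (starRingEnd ℂ) (wC p ^ n) = (wC p ^ n)⁻¹ := by
  rw [map_pow, ← inv_pow]
  congr 1
  rw [wC, ← Complex.exp_conj, ← Complex.exp_neg]
  congr 1
  simp [Complex.conj_I, map_ofNat]
  ring

lemma wC_ne_zero (p : ℕ) : wC p ≠ 0 := Complex.exp_ne_zero _

noncomputable def trHom (p r : ℕ) [Fact p.Prime] (c : GaloisField p r) :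
    GaloisField p r →+ ZMod p :=
  AddMonoidHom.mk' (fun x => gfTr p r (c * x)) (by intro a b; simp [gfTr, mul_add])

open scoped Classical in
lemma charSum {p r : ℕ} [Fact p.Prime] [Fintype (GaloisField p r)] (hr : 0 < r)
    (c : GaloisField p r) :
    ∑ x : GaloisField p r, eC p (gfTr p r (c * x)) = if c = 0 then ((p : ℂ) ^ r) else 0 := by
  have hcard : Fintype.card (GaloisField p r) = p ^ r := by
    rw [← Nat.card_eq_fintype_card, GaloisField.card p r hr.ne']
  split_ifs with hc
  · subst hc
    simp only [zero_mul]
    have h0 : gfTr p r (0 : GaloisField p r) = 0 := by simp [gfTr]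
    simp [h0, Finset.card_univ, hcard]
  · have key : ∑ x : GaloisField p r, ((eC p).compAddMonoidHom (trHom p r c)) x = 0 := by
      apply AddChar.sum_eq_zero_of_ne_one
      rw [AddChar.ne_one_iff]
      have hb : ∃ b, gfTr p r (c * b) ≠ 0 := by
        by_contra h
        push_neg at h
        have htr := traceForm_nondegenerate (ZMod p) (GaloisField p r)
        exact hc (htr.1 c (fun n => by simpa [Algebra.traceForm_apply, gfTr] using h n))
      obtain ⟨b, hb⟩ := hb
      refine ⟨b, ?_⟩
      rw [AddChar.compAddMonoidHom_apply]
      show eC p (gfTr p r (c * b)) ≠ 1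
      rw [eC_apply]
      exact (wprim p).pow_ne_one_of_pos_of_lt
        (fun h => hb ((ZMod.val_eq_zero _).mp h)) (ZMod.val_lt _)
    exact key

lemma sum_aMap {p r : ℕ} [Fact p.Prime] [Fintype (GaloisField p r)] (hr : 0 < r)
    {α : GaloisField p r} (hα : orderOf α = p ^ r - 1) (F : GaloisField p r → ℂ) :
    ∑ l ∈ Finset.range (p ^ r), F (aMap α l) = ∑ x : GaloisField p r, F x := by
  have hq : 1 < p ^ r := Nat.one_lt_pow hr.ne' (Fact.out : p.Prime).one_lt
  have hprim : IsPrimitiveRoot α (p ^ r - 1) := hα ▸ IsPrimitiveRoot.orderOf α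
  have hα0 : α ≠ 0 := hprim.ne_zero (by omega)
  have hinj : ∀ i ∈ Finset.range (p ^ r), ∀ j ∈ Finset.range (p ^ r),
      aMap α i = aMap α j → i = j := by
    intro i hi j hj h
    simp only [Finset.mem_range] at hi hj
    unfold aMap at h
    rcases eq_or_ne i 0 with h0 | h0 <;> rcases eq_or_ne j 0 with h0' | h0'
    · omega
    · rw [if_pos h0, if_neg h0'] at h
      exact absurd h.symm (pow_ne_zero _ hα0)
    · rw [if_neg h0, if_pos h0'] at h
      exact absurd h (pow_ne_zero _ hα0)
    · rw [if_neg h0, if_neg h0'] at h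
      have := hprim.pow_inj (by omega) (by omega) h
      omega
  classical
  rw [← Finset.sum_image hinj]
  congr 1
  apply Finset.eq_univ_of_card
  rw [Finset.card_image_of_injOn (fun x hx y hy => hinj x (by simpa using hx) y (by simpa using hy)),
    Finset.card_range, ← Nat.card_eq_fintype_card, GaloisField.card p r hr.ne']

open scoped Classical in
lemma innerSum {p r : ℕ} [Fact p.Prime] [Fintype (GaloisField p r)] (hr : 0 < r)
    {α : GaloisField p r} (hα : orderOf α = p ^ r - 1) (c d : GaloisField p r) :
    ∑ l ∈ Finset.range (p ^ r),
      wC p ^ (gfTr p r (c * aMap α l)).val *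
        (starRingEnd ℂ) (wC p ^ (gfTr p r (d * aMap α l)).val) =
      if c = d then ((p : ℂ) ^ r) else 0 := by
  rw [sum_aMap hr hα (fun x => wC p ^ (gfTr p r (c * x)).val *
      (starRingEnd ℂ) (wC p ^ (gfTr p r (d * x)).val))]
  have key : ∀ x : GaloisField p r,
      wC p ^ (gfTr p r (c * x)).val * (starRingEnd ℂ) (wC p ^ (gfTr p r (d * x)).val)
        = eC p (gfTr p r ((c - d) * x)) := by
    intro x
    rw [conj_wC_pow, ← eC_apply, ← eC_apply, ← AddChar.map_neg_eq_inv,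
      ← AddChar.map_add_eq_mul]
    congr 1
    show _ = Algebra.trace (ZMod p) (GaloisField p r) _
    rw [sub_mul, map_sub, sub_eq_add_neg]
    rfl
  simp_rw [key]
  rw [charSum hr (c - d)]
  simp [sub_eq_zero]

open scoped Classical in
lemma factorSum {p : ℕ} [Fact p.Prime] (a b : ℕ) (ha : a < p) (hb : b < p) :
    ∑ d : Fin p, (wC p ^ (a * (d : ℕ)) * (starRingEnd ℂ) (wC p ^ (b * (d : ℕ)))) =
      if a = b then (p : ℂ) else 0 := by
  have key : ∀ d : Fin p, wC p ^ (a * (d : ℕ)) * (starRingEnd ℂ) (wC p ^ (b * (d : ℕ)))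
      = (wC p ^ a * (starRingEnd ℂ) (wC p ^ b)) ^ (d : ℕ) := by
    intro d
    rw [mul_pow, ← pow_mul, ← map_pow, ← pow_mul]
  simp_rw [key]
  rw [Fin.sum_univ_eq_sum_range]
  have hz : (wC p ^ a * (starRingEnd ℂ) (wC p ^ b)) ^ p = 1 := by
    rw [mul_pow, ← pow_mul, ← map_pow, ← pow_mul, mul_comm a p, mul_comm b p,
      pow_mul, pow_mul, (wprim p).pow_eq_one, one_pow, one_pow, map_one, mul_one]
  split_ifs with hab
  · subst hab
    rw [conj_wC_pow, mul_inv_cancel₀ (pow_ne_zero _ (wC_ne_zero p))]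
    simp
  · have hz1 : wC p ^ a * (starRingEnd ℂ) (wC p ^ b) ≠ 1 := by
      intro h
      rw [conj_wC_pow] at h
      have : wC p ^ a = wC p ^ b := by
        field_simp at h
        exact (div_eq_one_iff_eq (pow_ne_zero _ (wC_ne_zero p))).mp h
      exact hab ((wprim p).pow_inj ha hb this)
    rw [geom_sum_eq hz1, hz]
    simp

open scoped Classical in
lemma digitSum {p : ℕ} (r : ℕ) [Fact p.Prime] (k₁ k₂ : ℕ) (h₁ : k₁ < p ^ r) (h₂ : k₂ < p ^ r) :
    ∑ i ∈ Finset.range (p ^ r),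
      wC p ^ dotDigits p r k₁ i * (starRingEnd ℂ) (wC p ^ dotDigits p r k₂ i) =
      if k₁ = k₂ then ((p : ℂ) ^ r) else 0 := by
  have hp : 0 < p := (Fact.out : p.Prime).pos
  rw [← Fin.sum_univ_eq_sum_range (fun i =>
    wC p ^ dotDigits p r k₁ i * (starRingEnd ℂ) (wC p ^ dotDigits p r k₂ i)) (p ^ r)]
  rw [← Equiv.sum_comp (finFunctionFinEquiv (m := p) (n := r))]
  have hdig : ∀ (g : Fin r → Fin p) (j : Fin r),
      ((finFunctionFinEquiv g : ℕ) / p ^ (j : ℕ) % p) = (g j : ℕ) := by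
    intro g j
    conv_rhs => rw [← Equiv.symm_apply_apply finFunctionFinEquiv g]
    rfl
  have hdot : ∀ (k : ℕ) (g : Fin r → Fin p),
      dotDigits p r k (finFunctionFinEquiv g : ℕ) =
        ∑ j : Fin r, (k / p ^ (j : ℕ) % p) * (g j : ℕ) := by
    intro k g
    rw [dotDigits, ← Fin.sum_univ_eq_sum_range (fun j =>
      (k / p ^ j % p) * ((finFunctionFinEquiv g : ℕ) / p ^ j % p)) r]
    exact Finset.sum_congr rfl fun j _ => by rw [hdig]
  have hterm : ∀ g : Fin r → Fin p,
      wC p ^ dotDigits p r k₁ (finFunctionFinEquiv g : ℕ) *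
        (starRingEnd ℂ) (wC p ^ dotDigits p r k₂ (finFunctionFinEquiv g : ℕ)) =
      ∏ j : Fin r, (wC p ^ ((k₁ / p ^ (j : ℕ) % p) * (g j : ℕ)) *
        (starRingEnd ℂ) (wC p ^ ((k₂ / p ^ (j : ℕ) % p) * (g j : ℕ)))) := by
    intro g
    rw [hdot, hdot, ← Finset.prod_pow_eq_pow_sum, ← Finset.prod_pow_eq_pow_sum,
      map_prod, ← Finset.prod_mul_distrib]
  simp_rw [hterm]
  rw [← Fintype.piFinset_univ, ← Finset.prod_univ_sum (fun _ : Fin r => (Finset.univ : Finset (Fin p)))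
    (fun j d => wC p ^ ((k₁ / p ^ (j : ℕ) % p) * (d : ℕ)) *
      (starRingEnd ℂ) (wC p ^ ((k₂ / p ^ (j : ℕ) % p) * (d : ℕ))))]
  have hfac : ∀ j : Fin r,
      (∑ d : Fin p, (wC p ^ ((k₁ / p ^ (j : ℕ) % p) * (d : ℕ)) *
        (starRingEnd ℂ) (wC p ^ ((k₂ / p ^ (j : ℕ) % p) * (d : ℕ))))) =
      if k₁ / p ^ (j : ℕ) % p = k₂ / p ^ (j : ℕ) % p then (p : ℂ) else 0 :=
    fun j => factorSum _ _ (Nat.mod_lt _ hp) (Nat.mod_lt _ hp)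
  split_ifs with hk
  · subst hk
    rw [Finset.prod_congr rfl fun j _ => (hfac j).trans (if_pos rfl)]
    simp
  · have : ∃ j : Fin r, k₁ / p ^ (j : ℕ) % p ≠ k₂ / p ^ (j : ℕ) % p := by
      by_contra h
      push_neg at h
      apply hk
      have : (⟨k₁, h₁⟩ : Fin (p ^ r)) = ⟨k₂, h₂⟩ := by
        apply finFunctionFinEquiv.symm.injective
        funext j
        apply Fin.ext
        simpa using h j
      simpa using this
    obtain ⟨j, hj⟩ := this
    exact Finset.prod_eq_zero (Finset.mem_univ j) ((hfac j).trans (if_neg hj))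

/-- The set `S = {ψ(S_k) : 0 ≤ k ≤ q-1}` forms a `(q, q, q)`-CCC. -/
theorem stmt_10 (p r : ℕ) [Fact p.Prime] (hr : 0 < r) (α : GaloisField p r)
    (hα : orderOf α = p ^ r - 1) (k₁ k₂ τ : ℕ) (h₁ : k₁ < p ^ r) (h₂ : k₂ < p ^ r)
    (hτ : τ < p ^ r) :
    ∑ l ∈ Finset.range (p ^ r), ∑ i ∈ Finset.range (p ^ r - τ),
      Skl p r α k₁ l i * (starRingEnd ℂ) (Skl p r α k₂ l (i + τ)) =
      if τ = 0 ∧ k₁ = k₂ then (p ^ r : ℂ) ^ 2 else 0 := by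
  haveI : Fintype (GaloisField p r) := Fintype.ofFinite _
  classical
  have hq : 1 < p ^ r := Nat.one_lt_pow hr.ne' (Fact.out : p.Prime).one_lt
  have hprim : IsPrimitiveRoot α (p ^ r - 1) := hα ▸ IsPrimitiveRoot.orderOf α
  have hα0 : α ≠ 0 := hprim.ne_zero (by omega)
  rw [Finset.sum_comm]
  have hSkl : ∀ k l i, Skl p r α k l i =
      wC p ^ dotDigits p r k i * wC p ^ (gfTr p r (aMap α i * aMap α l)).val := by
    intro k l i
    unfold Skl wC
    rw [pow_add]
  have key : ∀ i : ℕ,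
      ∑ l ∈ Finset.range (p ^ r), Skl p r α k₁ l i * (starRingEnd ℂ) (Skl p r α k₂ l (i + τ)) =
      (wC p ^ dotDigits p r k₁ i * (starRingEnd ℂ) (wC p ^ dotDigits p r k₂ (i + τ))) *
        (if aMap α i = aMap α (i + τ) then ((p : ℂ) ^ r) else 0) := by
    intro i
    rw [← innerSum hr hα (aMap α i) (aMap α (i + τ)), Finset.mul_sum]
    refine Finset.sum_congr rfl fun l _ => ?_
    simp only [hSkl, map_mul]
    ring
  simp_rw [key]
  rcases Nat.eq_zero_or_pos τ with hτ0 | hτ0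
  · subst hτ0
    simp only [add_zero, Nat.sub_zero, eq_self_iff_true, if_true, true_and]
    rw [← Finset.sum_mul, digitSum r k₁ k₂ h₁ h₂]
    by_cases hk : k₁ = k₂
    · simp [hk, sq]
    · simp [hk]
  · have hne : ∀ i ∈ Finset.range (p ^ r - τ), ¬ aMap α i = aMap α (i + τ) := by
      intro i hi h
      simp only [Finset.mem_range] at hi
      unfold aMap at h
      rcases eq_or_ne i 0 with h0 | h0
      · rw [if_pos h0, if_neg (by omega)] at h
        exact pow_ne_zero _ hα0 h.symm
      · rw [if_neg h0, if_neg (by omega)] at h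
        have := hprim.pow_inj (by omega) (by omega) h
        omega
    rw [if_neg (by omega : ¬(τ = 0 ∧ k₁ = k₂))]
    refine Finset.sum_eq_zero fun i hi => ?_
    rw [if_neg (hne i hi), mul_zero]
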